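/- Let G be a perfect group and let t ∈ G. Then t normally generates G (Subgroup.normalClosure {t} = ⊤) if and only if G is generated by commutators of elements of G with powers of t, i.e., ⁅(⊤ : Subgroup G), Subgroup.zpowers t⁆ = ⊤. -/

import Mathlib

open scoped commutatorElement

/-- The commutator subgroup `⁅⊤, K⁆` is normal for any subgroup `K`. -/
lemma commutator_top_normal {G : Type*} [Group G] (K : Subgroup G) :
    (⁅(⊤ : Subgroup G), K⁆).Normal := by
  constructor
  intro n hn x
  revert hn
  have hmem : ∀ m ∈ ⁅(⊤ : Subgroup G), K⁆, x * m * x⁻¹ ∈ ⁅(⊤ : Subgroup G), K⁆ := by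
    intro m hm
    refine Subgroup.closure_induction ?_ ?_ ?_ ?_ hm
    · rintro y ⟨g, -, k, hk, rfl⟩
      have hid : x * ⁅g, k⁆ * x⁻¹ = ⁅x * g, k⁆ * ⁅x, k⁆⁻¹ := by
        simp only [commutatorElement_def]; group
      rw [hid]
      exact mul_mem (Subgroup.commutator_mem_commutator (Subgroup.mem_top _) hk)
        (inv_mem (Subgroup.commutator_mem_commutator (Subgroup.mem_top _) hk))
    · simpa using (⁅(⊤ : Subgroup G), K⁆).one_mem
    · intro a b _ _ ha hb
      have : x * (a * b) * x⁻¹ = (x * a * x⁻¹) * (x * b * x⁻¹) := by group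
      rw [this]; exact mul_mem ha hb
    · intro a _ ha
      have : x * a⁻¹ * x⁻¹ = (x * a * x⁻¹)⁻¹ := by group
      rw [this]; exact inv_mem ha
  exact fun hn => hmem n hn

/-- Lemma 3.1: in a perfect group G, an element t normally generates G if and only if
G is generated by commutators of elements of G with powers of t. -/
theorem weight_element_iff_commutator_with_zpowers
    (G : Type*) [Group G]
    (hG : ⁅(⊤ : Subgroup G), (⊤ : Subgroup G)⁆ = ⊤) (t : G) :
    Subgroup.normalClosure {t} = ⊤ ↔ ⁅(⊤ : Subgroup G), Subgroup.zpowers t⁆ = ⊤ := by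
  constructor
  · intro h
    set N := ⁅(⊤ : Subgroup G), Subgroup.zpowers t⁆ with hNdef
    have hN : N.Normal := commutator_top_normal _
    set π := QuotientGroup.mk' N with hπ
    -- t maps to the center of G ⧸ N
    have htc : π t ∈ Subgroup.center (G ⧸ N) := by
      rw [Subgroup.mem_center_iff]
      intro g
      obtain ⟨x, rfl⟩ := QuotientGroup.mk'_surjective N g
      have : ⁅x, t⁆ ∈ N :=
        Subgroup.commutator_mem_commutator (Subgroup.mem_top _) (Subgroup.mem_zpowers t)
      have h1 : π ⁅x, t⁆ = 1 := (QuotientGroup.eq_one_iff _).mpr this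
      rw [map_commutatorElement] at h1
      have := commutatorElement_eq_one_iff_mul_comm.mp h1
      exact this
    have hcomap : Subgroup.normalClosure {t} ≤
        (Subgroup.center (G ⧸ N)).comap π := by
      apply Subgroup.normalClosure_le_normal
      exact Set.singleton_subset_iff.mpr htc
    have key : ⁅(⊤ : Subgroup G), Subgroup.normalClosure {t}⁆ ≤ N := by
      rw [Subgroup.commutator_le]
      intro g _ n hn
      have hcen : π n ∈ Subgroup.center (G ⧸ N) := hcomap hn
      have : π ⁅g, n⁆ = 1 := by
        rw [map_commutatorElement]
        exact commutatorElement_eq_one_iff_mul_comm.mpr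
          (Subgroup.mem_center_iff.mp hcen (π g))
      exact (QuotientGroup.eq_one_iff _).mp this
    rw [h, hG] at key
    exact le_antisymm le_top key
  · intro h
    have hle : ⁅(⊤ : Subgroup G), Subgroup.zpowers t⁆ ≤ Subgroup.normalClosure {t} := by
      rw [Subgroup.commutator_le]
      intro g _ k hk
      have ht : t ∈ Subgroup.normalClosure {t} :=
        Subgroup.subset_normalClosure rfl
      have hk' : k ∈ Subgroup.normalClosure {t} := by
        obtain ⟨n, rfl⟩ := hk
        exact zpow_mem ht n
      have hconj : g * k * g⁻¹ ∈ Subgroup.normalClosure {t} :=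
        (Subgroup.normalClosure_normal).conj_mem k hk' g
      simpa [commutatorElement_def, mul_assoc] using
        mul_mem hconj (inv_mem hk')
    rw [h] at hle
    exact le_antisymm le_top hle
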